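/- Let M = ⊕_{i∈I} M_i with Hom_R(M_i, M_j) = 0 for all i ≠ j. If each M_i is a dual Baer R-module, then M is a dual Baer R-module. -/

import Mathlib

universe u v w

/-- `M` is a dual Baer module: for every submodule `N` of `M`, the right ideal
`Hom(M,N)` of `End(M)` is generated by an idempotent. -/
def IsDualBaerModule (R : Type u) [Ring R] (M : Type v) [AddCommGroup M]
    [Module R M] : Prop :=
  ∀ N : Submodule R M, ∃ e : Module.End R M, IsIdempotentElem e ∧
    {f : Module.End R M | LinearMap.range f ≤ N} = Set.range fun s => e * s

theorem stmt10 (R : Type u) [Ring R] (ι : Type w) [DecidableEq ι]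
    (M : ι → Type v) [∀ i, AddCommGroup (M i)] [∀ i, Module R (M i)]
    (hhom : ∀ i j, i ≠ j → ∀ f : M i →ₗ[R] M j, f = 0)
    (hdbaer : ∀ i, IsDualBaerModule R (M i)) :
    IsDualBaerModule R (DirectSum ι M) := by
  classical
  intro N
  set Ni : ∀ i, Submodule R (M i) := fun i => N.comap (DirectSum.lof R ι M i) with hNi
  choose e he hset using fun i => hdbaer i (Ni i)
  -- diagonal endomorphism builder
  let D : (∀ i, Module.End R (M i)) → Module.End R (DirectSum ι M) :=
    fun g => DirectSum.toModule R ι _ (fun i => DirectSum.lof R ι M i ∘ₗ g i)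
  have hD : ∀ g i m, D g (DirectSum.lof R ι M i m) = DirectSum.lof R ι M i (g i m) := by
    intro g i m
    simp [D, DirectSum.toModule_lof]
  -- each e i has range in Ni i
  have heNi : ∀ i, LinearMap.range (e i) ≤ Ni i := by
    intro i
    have hmem : e i ∈ {f : Module.End R (M i) | LinearMap.range f ≤ Ni i} := by
      rw [hset i]; exact ⟨1, mul_one _⟩
    exact hmem
  have hrange : ∀ y : DirectSum ι M, D e y ∈ N := by
    intro y
    induction y using DirectSum.induction_on with
    | zero => simp
    | of i m =>
        rw [← DirectSum.lof_eq_of R, hD]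
        exact heNi i (LinearMap.mem_range_self _ m)
    | add x y hx hy => rw [map_add]; exact N.add_mem hx hy
  refine ⟨D e, ?_, ?_⟩
  · -- idempotent
    apply DirectSum.linearMap_ext
    intro i
    apply LinearMap.ext
    intro m
    simp only [LinearMap.comp_apply, Module.End.mul_apply, hD]
    congr 1
    exact DFunLike.congr_fun (he i) m
  · ext f
    constructor
    · intro hf
      -- decompose f into diagonal components
      set fi : ∀ i, Module.End R (M i) :=
        fun i => DirectSum.component R ι M i ∘ₗ (f : DirectSum ι M →ₗ[R] DirectSum ι M)
          ∘ₗ DirectSum.lof R ι M i with hfidef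
      have hfi : ∀ i m, f (DirectSum.lof R ι M i m) = DirectSum.lof R ι M i (fi i m) := by
        intro i m
        apply DFinsupp.ext
        intro j
        by_cases hj : j = i
        · subst hj
          rw [DirectSum.lof_apply]
          rfl
        · have h0 : (DirectSum.component R ι M j ∘ₗ
              (f : DirectSum ι M →ₗ[R] DirectSum ι M) ∘ₗ DirectSum.lof R ι M i) = 0 :=
            hhom i j (fun h => hj h.symm) _
          have h1 := DFunLike.congr_fun h0 m
          simp only [LinearMap.comp_apply, LinearMap.zero_apply] at h1
          have h2 : (DirectSum.lof R ι M i (fi i m)) j = 0 := by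
            rw [DirectSum.lof_eq_of R]
            exact DirectSum.of_eq_of_ne _ _ _ hj
          rw [h2]
          simp only [DirectSum.component] at h1; exact h1
      have hfiN : ∀ i, fi i ∈ {g : Module.End R (M i) | LinearMap.range g ≤ Ni i} := by
        intro i
        intro x hx
        obtain ⟨m, rfl⟩ := hx
        show DirectSum.lof R ι M i (fi i m) ∈ N
        rw [← hfi]
        exact hf (LinearMap.mem_range_self _ _)
      have hs : ∀ i, ∃ s, e i * s = fi i := by
        intro i
        have := hfiN i
        rw [hset i] at this
        exact this
      choose s hsf using hs
      refine ⟨D s, ?_⟩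
      apply DirectSum.linearMap_ext
      intro i
      apply LinearMap.ext
      intro m
      simp only [LinearMap.comp_apply, Module.End.mul_apply, hD, hfi]
      congr 1
      exact DFunLike.congr_fun (hsf i) m
    · rintro ⟨s, rfl⟩
      intro x hx
      obtain ⟨y, rfl⟩ := hx
      exact hrange (s y)
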